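/- For every integer k ≥ 2, the class of obligatory finite k-uniform hypergraphs is closed under one-point amalgamations: if F₁ and F₂ are obligatory finite k-uniform hypergraphs, v₁ ∈ V(F₁) and v₂ ∈ V(F₂), then the hypergraph obtained from the disjoint union of F₁ and F₂ by identifying v₁ with v₂ is obligatory. -/

import Mathlib

open Cardinal

universe u

/-- A colouring `f` of the vertices is proper for the edge set `E` if no edge
is monochromatic. -/
def IsProperColoring {V : Type*} {α : Type*} (E : Set (Set V)) (f : V → α) : Prop :=
  ∀ e ∈ E, ∃ x ∈ e, ∃ y ∈ e, f x ≠ f y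

/-- The chromatic number of the hypergraph `(V, E)`. -/
noncomputable def chromaticNumber (V : Type u) (E : Set (Set V)) : Cardinal.{u} :=
  sInf { κ : Cardinal.{u} | ∃ (α : Type u) (f : V → α), #α = κ ∧ IsProperColoring E f }

/-- A finite `k`-uniform hypergraph `(VF, EF)` is *obligatory* if every `k`-uniform
hypergraph of chromatic number at least `ℵ₁` contains a copy of it. -/
def Obligatory (k : ℕ) {VF : Type} (EF : Set (Set VF)) : Prop :=
  ∀ (V : Type u) (E : Set (Set V)), (∀ e ∈ E, e.ncard = k) →
    Cardinal.aleph 1 ≤ chromaticNumber V E →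
    ∃ φ : VF → V, Function.Injective φ ∧ ∀ e ∈ EF, φ '' e ∈ E

/-! ### Auxiliary lemmas about chromatic numbers -/

lemma cn_le_mk {V : Type u} {E : Set (Set V)} {α : Type u} (f : V → α)
    (hf : IsProperColoring E f) : chromaticNumber V E ≤ #α :=
  csInf_le' ⟨α, f, rfl, hf⟩

lemma proper_id_of_uniform {V : Type u} {E : Set (Set V)} {k : ℕ} (hk : 2 ≤ k)
    (hE : ∀ e ∈ E, e.ncard = k) : IsProperColoring E (id : V → V) := by
  intro e he
  have h := hE e he
  have hfin : e.Finite := Set.finite_of_ncard_ne_zero (by omega)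
  have h1 : 1 < e.ncard := by omega
  rw [Set.one_lt_ncard hfin] at h1
  obtain ⟨x, hx, y, hy, hxy⟩ := h1
  exact ⟨x, hx, y, hy, hxy⟩

lemma exists_min_coloring {V : Type u} {E : Set (Set V)} {k : ℕ} (hk : 2 ≤ k)
    (hE : ∀ e ∈ E, e.ncard = k) :
    ∃ (α : Type u) (f : V → α), #α = chromaticNumber V E ∧ IsProperColoring E f := by
  have hne : { κ : Cardinal.{u} | ∃ (α : Type u) (f : V → α),
      #α = κ ∧ IsProperColoring E f }.Nonempty :=
    ⟨#V, V, id, rfl, proper_id_of_uniform hk hE⟩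
  unfold chromaticNumber
  exact csInf_mem hne

lemma exists_nat_proper_of_not_aleph1 {V : Type u} {E : Set (Set V)} {k : ℕ} (hk : 2 ≤ k)
    (hE : ∀ e ∈ E, e.ncard = k) (h : ¬ Cardinal.aleph 1 ≤ chromaticNumber V E) :
    ∃ f : V → ℕ, IsProperColoring E f := by
  obtain ⟨α, f, hcard, hf⟩ := exists_min_coloring hk hE
  have hlt : #α < Cardinal.aleph 1 := hcard ▸ not_le.1 h
  have hle : #α ≤ ℵ₀ := by
    rwa [← Cardinal.succ_aleph0, Order.lt_succ_iff] at hlt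
  have : Countable α := Cardinal.mk_le_aleph0_iff.1 hle
  obtain ⟨g, hg⟩ := exists_injective_nat α
  refine ⟨g ∘ f, fun e he => ?_⟩
  obtain ⟨x, hx, y, hy, hxy⟩ := hf e he
  exact ⟨x, hx, y, hy, fun hh => hxy (hg hh)⟩

lemma subtype_uniform {V : Type u} {E : Set (Set V)} {k : ℕ} (hE : ∀ e ∈ E, e.ncard = k)
    {γ : Type u} (ι : γ → V) (hι : Function.Injective ι) :
    ∀ e ∈ {e : Set γ | ι '' e ∈ E}, e.ncard = k := fun e he => by
  rw [← Set.ncard_image_of_injective e hι]; exact hE _ he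

lemma image_val_preimage {V : Type u} {S : Set V} {e : Set V} (he : e ⊆ S) :
    Subtype.val '' {x : ↥S | (x : V) ∈ e} = e := by
  ext x
  constructor
  · rintro ⟨y, hy, rfl⟩; exact hy
  · intro hx; exact ⟨⟨x, he hx⟩, hx, rfl⟩

/-! ### A colouring-number lemma: a digraph with finite out-neighbourhoods admits a
proper `ℕ`-colouring of its underlying graph. -/

lemma exists_nat_coloring {β : Type*} (N : β → Set β) (hN : ∀ v, (N v).Finite) :
    ∃ c : β → ℕ, ∀ u v : β, u ≠ v → u ∈ N v → c u ≠ c v := by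
  classical
  -- reachability sets
  set Rl : β → β → Prop := fun a b => b ∈ N a with hRl
  set R : β → Set β := fun v => {u | Relation.ReflTransGen Rl v u} with hRdef
  have hRself : ∀ v, v ∈ R v := fun v => Relation.ReflTransGen.refl
  have hRclosed : ∀ {w u x}, u ∈ R w → x ∈ N u → x ∈ R w :=
    fun h hx => Relation.ReflTransGen.tail h hx
  have hRcount : ∀ v, (R v).Countable := by
    intro v
    let S : ℕ → Set β := fun n => Nat.rec {v} (fun _ s => s ∪ ⋃ u ∈ s, N u) n
    have hSfin : ∀ n, (S n).Finite := by
      intro n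
      induction n with
      | zero => exact Set.finite_singleton v
      | succ n ih => exact ih.union (ih.biUnion fun u _ => hN u)
    have hsub : R v ⊆ ⋃ n, S n := by
      intro u hu
      induction hu with
      | refl => exact Set.mem_iUnion.2 ⟨0, Set.mem_singleton v⟩
      | tail h hx ih =>
          obtain ⟨n, hn⟩ := Set.mem_iUnion.1 ih
          exact Set.mem_iUnion.2 ⟨n + 1, Or.inr (Set.mem_biUnion hn hx)⟩
    exact (Set.countable_iUnion fun n => (hSfin n).countable).mono hsub
  -- well-ordering and anchors
  let r : β → β → Prop := WellOrderingRel
  have wf : WellFounded r := IsWellFounded.wf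
  let anchor : β → β := fun v => wf.min {u | v ∈ R u} ⟨v, hRself v⟩
  have hanch1 : ∀ v, v ∈ R (anchor v) := fun v => wf.min_mem {u | v ∈ R u} ⟨v, hRself v⟩
  have hanch2 : ∀ v u, v ∈ R u → ¬ r u (anchor v) := fun v u hu => wf.not_lt_min {u | v ∈ R u} (x := u) hu
  let g : β → Ordinal := fun v => Ordinal.typein r (anchor v)
  have ganchor : ∀ {a b : β}, g a = g b → anchor a = anchor b :=
    fun h => Ordinal.typein_injective r h
  have harc : ∀ {v x}, x ∈ N v → g x ≤ g v := by
    intro v x hx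
    have hxR : x ∈ R (anchor v) := hRclosed (hanch1 v) hx
    have hnr := hanch2 x (anchor v) hxR
    exact (Ordinal.typein_le_typein r).2 hnr
  -- positions inside reachability sets
  have hexists : ∀ a : β, ∃ f : ↥(R a) → ℕ, Function.Injective f := fun a =>
    Set.countable_iff_exists_injective.1 (hRcount a)
  choose pf hpf using hexists
  let p : β → ℕ := fun v => pf (anchor v) ⟨v, hanch1 v⟩
  have pcast : ∀ {a b : β} (hab : a = b) (u : β) (hu : u ∈ R a),
      pf a ⟨u, hu⟩ = pf b ⟨u, hab ▸ hu⟩ := by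
    rintro a b rfl u hu; rfl
  have pinj : ∀ {a b : β}, anchor a = anchor b → p a = p b → a = b := by
    intro a b ha hp
    have h1 : p a = pf (anchor b) ⟨a, ha ▸ hanch1 a⟩ := pcast ha a (hanch1 a)
    have h2 : pf (anchor b) ⟨a, ha ▸ hanch1 a⟩ = pf (anchor b) ⟨b, hanch1 b⟩ := by
      rw [← h1, hp]
    exact congrArg Subtype.val (hpf (anchor b) h2)
  -- the well-founded "earlier" relation
  let rel : β → β → Prop := fun a b => g a < g b ∨ (g a = g b ∧ p a < p b)
  have relwf : WellFounded rel := by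
    have lexwf : WellFounded (InvImage
        (Prod.Lex ((· < ·) : Ordinal → Ordinal → Prop) ((· < ·) : ℕ → ℕ → Prop))
        (fun v => (g v, p v))) :=
      InvImage.wf _ (WellFounded.prod_lex Ordinal.lt_wf (Nat.lt_wfRel.wf))
    refine Subrelation.wf ?_ lexwf
    intro a b hab
    show Prod.Lex ((· < ·) : Ordinal → Ordinal → Prop) ((· < ·) : ℕ → ℕ → Prop)
      (g a, p a) (g b, p b)
    rw [Prod.lex_def]
    exact hab
  -- finiteness of earlier neighbours
  have hEv : ∀ v : β, {u | (u ∈ N v ∨ v ∈ N u) ∧ rel u v}.Finite := by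
    intro v
    have h1 : {u | (u ∈ N v ∨ v ∈ N u) ∧ rel u v} ⊆
        N v ∪ {u | anchor u = anchor v ∧ p u < p v} := by
      rintro u ⟨hedge, hrel⟩
      rcases hedge with h | h
      · exact Or.inl h
      · have hle : g v ≤ g u := harc h
        rcases hrel with hlt | ⟨heq, hplt⟩
        · exact absurd hlt (not_lt.2 hle)
        · exact Or.inr ⟨ganchor heq, hplt⟩
    refine ((hN v).union ?_).subset h1
    have hinj : Set.InjOn p {u | anchor u = anchor v ∧ p u < p v} := by
      intro a ha b hb hab
      exact pinj (ha.1.trans hb.1.symm) hab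
    refine Set.Finite.of_finite_image ?_ hinj
    refine (Set.finite_Iio (p v)).subset ?_
    rintro n ⟨u, ⟨_, hu⟩, rfl⟩
    exact hu
  -- the greedy colouring
  let body : ∀ v : β, (∀ u, rel u v → ℕ) → ℕ := fun v ih =>
    sInf {n : ℕ | ∀ u (h : rel u v), (u ∈ N v ∨ v ∈ N u) → ih u h ≠ n}
  let c : β → ℕ := relwf.fix body
  have hc : ∀ v, c v = body v (fun u _ => c u) := fun v => relwf.fix_eq body v
  have hmem : ∀ v u, rel u v → (u ∈ N v ∨ v ∈ N u) → c u ≠ c v := by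
    intro v
    have hfin : {n : ℕ | ∃ u, ∃ _ : (u ∈ N v ∨ v ∈ N u) ∧ rel u v, c u = n}.Finite :=
      (hEv v).dependent_image (fun u _ => c u)
    have hne : {n : ℕ | ∀ u (h : rel u v), (u ∈ N v ∨ v ∈ N u) → c u ≠ n}.Nonempty := by
      obtain ⟨n, hn⟩ := (hfin.infinite_compl).nonempty
      refine ⟨n, fun u h hedge hcu => hn ?_⟩
      exact ⟨u, ⟨hedge, h⟩, hcu⟩
    have hsinf := Nat.sInf_mem hne
    have hceq : c v ∈ {n : ℕ | ∀ u (h : rel u v), (u ∈ N v ∨ v ∈ N u) → c u ≠ n} := by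
      rw [hc v]
      exact hsinf
    intro u hr hedge
    exact hceq u hr hedge
  refine ⟨c, ?_⟩
  intro u v huv hu
  rcases lt_trichotomy (g u) (g v) with h | h | h
  · exact hmem v u (Or.inl h) (Or.inl hu)
  · rcases lt_trichotomy (p u) (p v) with h2 | h2 | h2
    · exact hmem v u (Or.inr ⟨h, h2⟩) (Or.inl hu)
    · exact absurd (pinj (ganchor h) h2) huv
    · exact (hmem u v (Or.inr ⟨h.symm, h2⟩) (Or.inr hu)).symm
  · exact (hmem u v (Or.inl h) (Or.inr hu)).symm

/-! ### Good vertices -/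

/-- A vertex `v` of a hypergraph `(V, E)` is good (w.r.t. the rooted finite hypergraph
`(V₂, E₂, v₂)`) if for every finite set `X` there is a copy of `(V₂, E₂)` in `(V, E)`
rooted at `v` whose image meets `X` only possibly in `v`. -/
def GoodVertex {V₂ : Type} (E₂ : Set (Set V₂)) (v₂ : V₂) {V : Type u} (E : Set (Set V))
    (v : V) : Prop :=
  ∀ X : Set V, X.Finite → ∃ θ : V₂ → V, Function.Injective θ ∧ θ v₂ = v ∧
    (∀ e ∈ E₂, θ '' e ∈ E) ∧ ∀ u, θ u ∈ X → θ u = v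

lemma not_good_witness {V₂ : Type} {E₂ : Set (Set V₂)} {v₂ : V₂} {V : Type u}
    {E : Set (Set V)} {v : V} (h : ¬ GoodVertex E₂ v₂ E v) :
    ∃ X : Set V, X.Finite ∧ ∀ θ : V₂ → V, Function.Injective θ → θ v₂ = v →
      (∀ e ∈ E₂, θ '' e ∈ E) → ∃ u, θ u ∈ X ∧ θ u ≠ v := by
  unfold GoodVertex at h
  push_neg at h
  exact h

/-- The class of obligatory finite `k`-uniform hypergraphs is closed under one-point
amalgamations: if `(V₁, E₁)` and `(V₂, E₂)` are obligatory and `(W, EW)` is obtained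
from their disjoint union by identifying `v₁ ∈ V₁` with `v₂ ∈ V₂` — described here by
injections `φ₁ : V₁ → W` and `φ₂ : V₂ → W` whose images cover `W` and meet exactly in
the amalgamated point `φ₁ v₁ = φ₂ v₂`, the edges of `W` being the images of the edges
of the two parts — then `(W, EW)` is obligatory. -/
theorem obligatory_onePointAmalgamation (k : ℕ) (hk : 2 ≤ k)
    {V₁ V₂ W : Type} [Finite V₁] [Finite V₂]
    (E₁ : Set (Set V₁)) (E₂ : Set (Set V₂))
    (h₁ : ∀ e ∈ E₁, e.ncard = k) (h₂ : ∀ e ∈ E₂, e.ncard = k)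
    (hObl₁ : Obligatory.{u} k E₁) (hObl₂ : Obligatory.{u} k E₂)
    (v₁ : V₁) (v₂ : V₂) (φ₁ : V₁ → W) (φ₂ : V₂ → W)
    (hφ₁ : Function.Injective φ₁) (hφ₂ : Function.Injective φ₂)
    (hv : φ₁ v₁ = φ₂ v₂)
    (hmeet : Set.range φ₁ ∩ Set.range φ₂ = {φ₁ v₁})
    (hcover : Set.range φ₁ ∪ Set.range φ₂ = Set.univ) :
    Obligatory.{u} k
      ((fun e => φ₁ '' e) '' E₁ ∪ (fun e => φ₂ '' e) '' E₂ : Set (Set W)) := by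
  intro V E hE hχ
  classical
  -- The set of bad (non-good) vertices, with their finite witnesses.
  set B : Set V := {v | ¬ GoodVertex E₂ v₂ E v} with hBdef
  have hwitex : ∀ b : ↥B, ∃ X : Set V, X.Finite ∧ ∀ θ : V₂ → V, Function.Injective θ →
      θ v₂ = (b : V) → (∀ e ∈ E₂, θ '' e ∈ E) → ∃ u, θ u ∈ X ∧ θ u ≠ (b : V) :=
    fun b => not_good_witness b.2
  choose Xw hXfin hXblock using hwitex
  -- A countable colouring of the conflict digraph on the bad set.
  obtain ⟨cΓ, hcΓ⟩ := exists_nat_coloring (fun b : ↥B => {a : ↥B | (a : V) ∈ Xw b})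
    (fun b => (hXfin b).preimage (Subtype.val_injective.injOn))
  -- The classes of the colouring.
  set In : ℕ → Set ↥B := fun n => {b | cΓ b = n} with hIndef
  let ι : ∀ n, ↥(In n) → V := fun n x => ((x : ↥B) : V)
  have ιinj : ∀ n, Function.Injective (ι n) := fun n =>
    Subtype.val_injective.comp Subtype.val_injective
  set EIn : ∀ n : ℕ, Set (Set ↥(In n)) := fun n => {e | ι n '' e ∈ E} with hEIndef
  have hInuniform : ∀ n, ∀ e ∈ EIn n, e.ncard = k := fun n => subtype_uniform hE (ι n) (ιinj n)
  -- Each class is countably chromatic: otherwise it contains a copy of `F₂` rooted at a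
  -- bad vertex and avoiding its witness (by independence of the class).
  have hInsmall : ∀ n, ¬ Cardinal.aleph 1 ≤ chromaticNumber ↥(In n) (EIn n) := by
    intro n hn
    obtain ⟨φ, hφinj, hφedges⟩ := hObl₂ _ (EIn n) (hInuniform n) hn
    set θ : V₂ → V := fun u => ι n (φ u) with hθdef
    have hθinj : Function.Injective θ := (ιinj n).comp hφinj
    have hθedges : ∀ e ∈ E₂, θ '' e ∈ E := by
      intro e he
      have h' := hφedges e he
      have him : θ '' e = ι n '' (φ '' e) := (Set.image_image _ _ _).symm
      rw [him]
      exact h'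
    set b0 : ↥B := ((φ v₂ : ↥(In n)) : ↥B) with hb0
    obtain ⟨u, humem, hune⟩ := hXblock b0 θ hθinj rfl hθedges
    set a : ↥B := ((φ u : ↥(In n)) : ↥B) with ha
    have hane : a ≠ b0 := fun h => hune (congrArg Subtype.val h)
    have h1 : cΓ a = n := (φ u).2
    have h2 : cΓ b0 = n := (φ v₂).2
    exact hcΓ a b0 hane humem (h1.trans h2.symm)
  -- pick countable proper colourings of the classes
  have hInColor : ∀ n, ∃ f : ↥(In n) → ℕ, IsProperColoring (EIn n) f := fun n =>
    exists_nat_proper_of_not_aleph1 hk (hInuniform n) (hInsmall n)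
  choose dn hdn using hInColor
  -- combine them into a countable proper colouring of the bad set
  let cB : ↥B → ℕ × ℕ := fun b => (cΓ b, dn (cΓ b) ⟨b, rfl⟩)
  have cBeq : ∀ (n : ℕ) (z : ↥(In n)), cB ((z : ↥B)) = (n, dn n z) := by
    intro n z
    obtain ⟨b, hb⟩ := z
    have hb' : cΓ b = n := hb
    subst hb'
    rfl
  have hcB : ∀ e : Set ↥B, Subtype.val '' e ∈ E → ∃ x ∈ e, ∃ y ∈ e, cB x ≠ cB y := by
    intro e he
    by_cases hsame : ∀ x ∈ e, ∀ y ∈ e, cΓ x = cΓ y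
    · have hkcard := hE _ he
      have hne : (Subtype.val '' e).Nonempty := Set.nonempty_of_ncard_ne_zero (by omega)
      obtain ⟨x0v, x0, hx0e, rfl⟩ := hne
      set n : ℕ := cΓ x0 with hn
      set e' : Set ↥(In n) := {z | (z : ↥B) ∈ e} with he'def
      have he' : e' ∈ EIn n := by
        show ι n '' e' ∈ E
        have him : ι n '' e' = Subtype.val '' e := by
          ext w
          constructor
          · rintro ⟨z, hz, rfl⟩; exact ⟨(z : ↥B), hz, rfl⟩
          · rintro ⟨b, hb, rfl⟩
            exact ⟨⟨b, (hsame b hb x0 hx0e : cΓ b = n)⟩, hb, rfl⟩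
        rw [him]
        exact he
      obtain ⟨z, hz, w, hw, hzw⟩ := hdn n e' he'
      refine ⟨(z : ↥B), hz, (w : ↥B), hw, ?_⟩
      intro hcon
      apply hzw
      rw [cBeq n z, cBeq n w] at hcon
      exact congrArg Prod.snd hcon
    · push_neg at hsame
      obtain ⟨x, hx, y, hy, hxy⟩ := hsame
      exact ⟨x, hx, y, hy, fun h => hxy (congrArg Prod.fst h)⟩
  -- The good set.
  set G : Set V := {v | GoodVertex E₂ v₂ E v} with hGdef
  set EG : Set (Set ↥G) := {e | Subtype.val '' e ∈ E} with hEGdef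
  have hGuniform : ∀ e ∈ EG, e.ncard = k := subtype_uniform hE _ Subtype.val_injective
  -- The good set is uncountably chromatic.
  have hGbig : Cardinal.aleph 1 ≤ chromaticNumber ↥G EG := by
    by_contra hG
    obtain ⟨cG, hcG⟩ := exists_nat_proper_of_not_aleph1 hk hGuniform hG
    let f : V → ULift.{u} (ℕ ⊕ (ℕ × ℕ)) := fun v =>
      if h : GoodVertex E₂ v₂ E v then ULift.up (Sum.inl (cG ⟨v, h⟩))
      else ULift.up (Sum.inr (cB ⟨v, h⟩))
    have hf : IsProperColoring E f := by
      intro e he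
      by_cases hallG : ∀ x ∈ e, GoodVertex E₂ v₂ E x
      · set e' : Set ↥G := {z | (z : V) ∈ e} with he'def
        have hee : Subtype.val '' e' = e := image_val_preimage hallG
        obtain ⟨z, hz, w, hw, hzw⟩ := hcG e' (by rw [Set.mem_setOf_eq, hee]; exact he)
        refine ⟨(z : V), hz, (w : V), hw, ?_⟩
        intro hcon
        apply hzw
        have hz' : f (z : V) = ULift.up (Sum.inl (cG z)) := by
          simp only [f, dif_pos (hallG _ hz)]
        have hw' : f (w : V) = ULift.up (Sum.inl (cG w)) := by
          simp only [f, dif_pos (hallG _ hw)]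
        rw [hz', hw'] at hcon
        exact Sum.inl.inj (congrArg ULift.down hcon)
      · by_cases hallB : ∀ x ∈ e, ¬ GoodVertex E₂ v₂ E x
        · set e' : Set ↥B := {z | (z : V) ∈ e} with he'def
          have hee : Subtype.val '' e' = e := image_val_preimage hallB
          obtain ⟨z, hz, w, hw, hzw⟩ := hcB e' (by rw [hee]; exact he)
          refine ⟨(z : V), hz, (w : V), hw, ?_⟩
          intro hcon
          apply hzw
          have hz' : f (z : V) = ULift.up (Sum.inr (cB z)) := by
            simp only [f, dif_neg (z.2 : ¬ GoodVertex E₂ v₂ E (z : V))]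
          have hw' : f (w : V) = ULift.up (Sum.inr (cB w)) := by
            simp only [f, dif_neg (w.2 : ¬ GoodVertex E₂ v₂ E (w : V))]
          rw [hz', hw'] at hcon
          exact Sum.inr.inj (congrArg ULift.down hcon)
        · push_neg at hallG hallB
          obtain ⟨x, hx, hxg⟩ := hallG
          obtain ⟨y, hy, hyg⟩ := hallB
          refine ⟨y, hy, x, hx, ?_⟩
          have hx' : f x = ULift.up (Sum.inr (cB ⟨x, hxg⟩)) := by
            simp only [f, dif_neg hxg]
          have hy' : f y = ULift.up (Sum.inl (cG ⟨y, hyg⟩)) := by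
            simp only [f, dif_pos hyg]
          rw [hx', hy']
          intro hcon
          exact Sum.inl_ne_inr (congrArg ULift.down hcon)
    have hle : chromaticNumber V E ≤ ℵ₀ := (cn_le_mk f hf).trans Cardinal.mk_le_aleph0
    exact absurd (hχ.trans hle) (not_le.2 Cardinal.aleph0_lt_aleph_one)
  -- Get a copy of `F₁` inside the good set.
  obtain ⟨ψ', hψ'inj, hψ'edges⟩ := hObl₁ _ EG hGuniform hGbig
  set ψ : V₁ → V := fun u => ((ψ' u : ↥G) : V) with hψdef
  have hψinj : Function.Injective ψ := Subtype.val_injective.comp hψ'inj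
  have hψedges : ∀ e ∈ E₁, ψ '' e ∈ E := by
    intro e he
    have h' := hψ'edges e he
    have him : ψ '' e = Subtype.val '' (ψ' '' e) := (Set.image_image _ _ _).symm
    rw [him]
    exact h'
  -- Attach a copy of `F₂` at the root, avoiding the rest of the copy of `F₁`.
  have hgood : GoodVertex E₂ v₂ E (ψ v₁) := (ψ' v₁).2
  obtain ⟨θ, hθinj, hθroot, hθedges, hθavoid⟩ := hgood (Set.range ψ) (Set.finite_range ψ)
  -- Build the embedding of the amalgam.
  have hrange : ∀ w : W, ¬(∃ u, φ₁ u = w) → ∃ u, φ₂ u = w := by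
    intro w h
    have hw : w ∈ Set.range φ₁ ∪ Set.range φ₂ := by
      rw [hcover]; exact Set.mem_univ w
    rcases hw with h1 | h2
    · exact absurd h1 h
    · exact h2
  let Φ : W → V := fun w =>
    if h : ∃ u, φ₁ u = w then ψ h.choose else θ (hrange w h).choose
  have hΦ1 : ∀ u, Φ (φ₁ u) = ψ u := by
    intro u
    have h : ∃ u', φ₁ u' = φ₁ u := ⟨u, rfl⟩
    simp only [Φ, dif_pos h]
    exact congrArg ψ (hφ₁ h.choose_spec)
  have hΦ2 : ∀ u, Φ (φ₂ u) = θ u := by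
    intro u
    by_cases h : ∃ u', φ₁ u' = φ₂ u
    · have hmem2 : φ₂ u ∈ Set.range φ₁ ∩ Set.range φ₂ := ⟨⟨h.choose, h.choose_spec⟩, ⟨u, rfl⟩⟩
      rw [hmeet, Set.mem_singleton_iff] at hmem2
      -- hmem2 : φ₂ u = φ₁ v₁
      have hu : u = v₂ := hφ₂ (by rw [← hv]; exact hmem2)
      have hch : h.choose = v₁ := hφ₁ (by rw [h.choose_spec]; exact hmem2)
      simp only [Φ, dif_pos h]
      rw [hch, hu, ← hθroot]
    · simp only [Φ, dif_neg h]
      exact congrArg θ (hφ₂ (hrange _ h).choose_spec)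
  have hcases : ∀ w : W, (∃ u, φ₁ u = w) ∨ (∃ u, φ₂ u = w) := by
    intro w
    by_cases h : ∃ u, φ₁ u = w
    · exact Or.inl h
    · exact Or.inr (hrange w h)
  have hθmeet : ∀ u, θ u ∈ Set.range ψ → θ u = ψ v₁ := fun u hu => hθavoid u hu
  have hΦinj : Function.Injective Φ := by
    intro w w' heq
    rcases hcases w with ⟨u, rfl⟩ | ⟨u, rfl⟩ <;> rcases hcases w' with ⟨u', rfl⟩ | ⟨u', rfl⟩
    · rw [hΦ1, hΦ1] at heq
      rw [hψinj heq]
    · rw [hΦ1, hΦ2] at heq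
      have h1 : θ u' = ψ v₁ := hθmeet u' ⟨u, heq⟩
      have h2 : u' = v₂ := hθinj (h1.trans hθroot.symm)
      have h3 : u = v₁ := hψinj (heq.trans h1)
      rw [h2, h3, hv]
    · rw [hΦ2, hΦ1] at heq
      have h1 : θ u = ψ v₁ := hθmeet u ⟨u', heq.symm⟩
      have h2 : u = v₂ := hθinj (h1.trans hθroot.symm)
      have h3 : u' = v₁ := hψinj (heq.symm.trans h1)
      rw [h2, h3, hv]
    · rw [hΦ2, hΦ2] at heq
      rw [hθinj heq]
  refine ⟨Φ, hΦinj, ?_⟩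
  rintro e (⟨e₁, he₁, rfl⟩ | ⟨e₂, he₂, rfl⟩)
  · have him : Φ '' (φ₁ '' e₁) = ψ '' e₁ := by
      rw [Set.image_image]
      exact Set.image_congr fun x _ => hΦ1 x
    rw [him]
    exact hψedges e₁ he₁
  · have him : Φ '' (φ₂ '' e₂) = θ '' e₂ := by
      rw [Set.image_image]
      exact Set.image_congr fun x _ => hΦ2 x
    rw [him]
    exact hθedges e₂ he₂
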